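/- arXiv:2308.10017 — 2 statements merged into one kernel-verified Lean document; each statement's English description precedes it below -/
import Mathlib

section
/- Let 𝔄 be a unital C*-algebra, let E and F be Hilbert 𝔄-modules with E full, and let Ψ : E → F be a bijective 𝔄-linear orthogonality-preserving map. Let (V_n)_{n∈ℕ*} be a sequence of orthogonally complemented submodules of E. Then (Ψ(V_n))_{n∈ℕ*} is a sequence of orthogonally complemented submodules of F, and the orthogonal projection onto Ψ(V_n) satisfies P_{Ψ(V_n)} = Ψ ∘ P_{V_n} ∘ Ψ⁻¹ for every n ∈ ℕ*. -/
open scoped InnerProductSpace RightActions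

/-- The December 2024 Mathlib `CStarModule` (right Hilbert modules, action of `Aᵐᵒᵖ`),
restored under a new name since Mathlib's `CStarModule` now means left modules. -/
class RightCStarModule (A : outParam Type*) (E : Type*) [NonUnitalSemiring A] [StarRing A]
    [Module ℂ A] [AddCommGroup E] [Module ℂ E] [PartialOrder A] [SMul Aᵐᵒᵖ E] [Norm A] [Norm E]
    extends Inner A E where
  inner_add_right {x} {y} {z} : inner x (y + z) = inner x y + inner x z
  inner_self_nonneg {x} : 0 ≤ inner x x
  inner_self {x} : inner x x = 0 ↔ x = 0
  inner_op_smul_right {a : A} {x y : E} : inner x (y <• a) = inner x y * a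
  inner_smul_right_complex {z : ℂ} {x} {y} : inner x (z • y) = z • inner x y
  star_inner x y : star (inner x y) = inner y x
  norm_eq_sqrt_norm_inner_self x : ‖x‖ = Real.sqrt ‖inner x x‖

variable {𝔄 : Type*} [CStarAlgebra 𝔄] [PartialOrder 𝔄] [StarOrderedRing 𝔄]
variable {E : Type*} [NormedAddCommGroup E] [NormedSpace ℂ E] [Module 𝔄ᵐᵒᵖ E]
  [RightCStarModule 𝔄 E] [CompleteSpace E]
variable {F : Type*} [NormedAddCommGroup F] [NormedSpace ℂ F] [Module 𝔄ᵐᵒᵖ F]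
  [RightCStarModule 𝔄 F] [CompleteSpace F]

/-- An element of a C*-algebra is *strictly positive* if it is positive and invertible. -/
def IsStrictlyPositive' (a : 𝔄) : Prop := 0 ≤ a ∧ IsUnit a

/-- A *weight* of the C*-algebra `𝔄` is a sequence of central strictly positive elements. -/
def IsWeight (ω : ℕ → 𝔄) : Prop :=
  ∀ n, ω n ∈ Set.center 𝔄 ∧ IsStrictlyPositive' (ω n)

/-- `Q` is the orthogonal projection of the Hilbert `𝔄`-module `M` onto the orthogonally
complemented submodule `K`: a continuous linear `𝔄`-linear idempotent which is self-adjoint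
with respect to the `𝔄`-valued inner product and has range `K`. -/
def IsOrthoProjMapOnto {M : Type*} [NormedAddCommGroup M] [NormedSpace ℂ M]
    [Module 𝔄ᵐᵒᵖ M] [RightCStarModule 𝔄 M] (Q : M → M) (K : Submodule 𝔄ᵐᵒᵖ M) : Prop :=
  Continuous Q ∧ (∀ x y : M, Q (x + y) = Q x + Q y) ∧
  (∀ (c : ℂ) (x : M), Q (c • x) = c • Q x) ∧
  (∀ (a : 𝔄) (x : M), Q (x <• a) = (Q x) <• a) ∧
  (∀ x : M, Q (Q x) = Q x) ∧
  (∀ x y : M, ⟪Q x, y⟫_𝔄 = ⟪x, Q y⟫_𝔄) ∧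
  (∀ x : M, Q x ∈ K) ∧ (∀ x ∈ K, Q x = x)

/-- The Hilbert `𝔄`-module `E` is *full* if the linear span of the inner products
`⟪x, y⟫`, `x y : E`, is dense in `𝔄`. -/
def IsFullModule (𝔄 : outParam Type*) (E : Type*) [CStarAlgebra 𝔄] [PartialOrder 𝔄]
    [StarOrderedRing 𝔄] [NormedAddCommGroup E] [NormedSpace ℂ E] [Module 𝔄ᵐᵒᵖ E]
    [RightCStarModule 𝔄 E] : Prop :=
  closure ((Submodule.span ℂ {a : 𝔄 | ∃ x y : E, a = ⟪x, y⟫_𝔄} : Submodule ℂ 𝔄) : Set 𝔄)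
    = Set.univ

/-- `Ψ : E → F` is orthogonality preserving. -/
def IsOrthogonalityPreserving (Ψ : E → F) : Prop :=
  ∀ x y : E, ⟪x, y⟫_𝔄 = 0 → ⟪Ψ x, Ψ y⟫_𝔄 = 0

section RCMHelpers

variable {M : Type*} [NormedAddCommGroup M] [NormedSpace ℂ M] [Module 𝔄ᵐᵒᵖ M]
  [RightCStarModule 𝔄 M]

lemma RightCStarModule.inner_add_left {x y z : M} :
    ⟪x + y, z⟫_𝔄 = ⟪x, z⟫_𝔄 + ⟪y, z⟫_𝔄 := by
  rw [← RightCStarModule.star_inner z (x + y), RightCStarModule.inner_add_right, star_add,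
    RightCStarModule.star_inner, RightCStarModule.star_inner]

lemma RightCStarModule.inner_sub_right {x y z : M} :
    ⟪x, y - z⟫_𝔄 = ⟪x, y⟫_𝔄 - ⟪x, z⟫_𝔄 := by
  rw [eq_sub_iff_add_eq, ← RightCStarModule.inner_add_right, sub_add_cancel]

lemma RightCStarModule.inner_sub_left {x y z : M} :
    ⟪x - y, z⟫_𝔄 = ⟪x, z⟫_𝔄 - ⟪y, z⟫_𝔄 := by
  rw [eq_sub_iff_add_eq, ← RightCStarModule.inner_add_left, sub_add_cancel]

lemma RightCStarModule.inner_op_smul_left {a : 𝔄} {x y : M} :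
    ⟪x <• a, y⟫_𝔄 = star a * ⟪x, y⟫_𝔄 := by
  rw [← RightCStarModule.star_inner y, RightCStarModule.inner_op_smul_right, star_mul,
    RightCStarModule.star_inner]

lemma RightCStarModule.inner_smul_left_complex {c : ℂ} {x y : M} :
    ⟪c • x, y⟫_𝔄 = star c • ⟪x, y⟫_𝔄 := by
  rw [← RightCStarModule.star_inner y, RightCStarModule.inner_smul_right_complex, star_smul,
    RightCStarModule.star_inner]

lemma RightCStarModule.inner_zero_left' {y : M} : ⟪(0 : M), y⟫_𝔄 = 0 := by
  have := RightCStarModule.inner_smul_left_complex (𝔄 := 𝔄) (c := 0) (x := (0 : M)) (y := y)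
  rwa [zero_smul, star_zero, zero_smul] at this

lemma RightCStarModule.inner_mul_le (x y : M) :
    star ⟪x, y⟫_𝔄 * ⟪x, y⟫_𝔄 ≤ (‖x‖ ^ 2) • ⟪y, y⟫_𝔄 := by
  have hxx : ‖⟪x, x⟫_𝔄‖ = ‖x‖ ^ 2 := by
    rw [RightCStarModule.norm_eq_sqrt_norm_inner_self x, Real.sq_sqrt (norm_nonneg _)]
  have hstar : star ⟪x, y⟫_𝔄 = ⟪y, x⟫_𝔄 := RightCStarModule.star_inner x y
  have h0 : (0 : 𝔄) ≤ ⟪x <• ⟪x, y⟫_𝔄 - ((‖x‖ ^ 2 : ℝ) : ℂ) • y,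
      x <• ⟪x, y⟫_𝔄 - ((‖x‖ ^ 2 : ℝ) : ℂ) • y⟫_𝔄 := RightCStarModule.inner_self_nonneg
  have hexp : ⟪x <• ⟪x, y⟫_𝔄 - ((‖x‖ ^ 2 : ℝ) : ℂ) • y,
      x <• ⟪x, y⟫_𝔄 - ((‖x‖ ^ 2 : ℝ) : ℂ) • y⟫_𝔄 =
      star ⟪x, y⟫_𝔄 * ⟪x, x⟫_𝔄 * ⟪x, y⟫_𝔄 - (‖x‖ ^ 2) • (star ⟪x, y⟫_𝔄 * ⟪x, y⟫_𝔄)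
        - (‖x‖ ^ 2) • (star ⟪x, y⟫_𝔄 * ⟪x, y⟫_𝔄) + (‖x‖ ^ 2) • (‖x‖ ^ 2) • ⟪y, y⟫_𝔄 := by
    simp only [RightCStarModule.inner_sub_left, RightCStarModule.inner_sub_right,
      RightCStarModule.inner_op_smul_left, RightCStarModule.inner_op_smul_right,
      RightCStarModule.inner_smul_left_complex, RightCStarModule.inner_smul_right_complex,
      Complex.star_def, Complex.conj_ofReal, ← hstar, mul_assoc]
    simp only [Complex.coe_smul, mul_smul_comm, smul_mul_assoc, sub_mul, mul_sub, smul_sub,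
      mul_assoc]
    abel
  have hle : star ⟪x, y⟫_𝔄 * ⟪x, x⟫_𝔄 * ⟪x, y⟫_𝔄 ≤ (‖x‖ ^ 2) • (star ⟪x, y⟫_𝔄 * ⟪x, y⟫_𝔄) := by
    rw [← hxx]
    exact CStarAlgebra.star_left_conjugate_le_norm_smul (RightCStarModule.star_inner x x)
  rcases eq_or_ne x 0 with h | h
  · subst h
    simp [RightCStarModule.inner_zero_left']
  have hpos : (0 : ℝ) < ‖x‖ ^ 2 := by positivity
  rw [hexp] at h0
  have h1 : (‖x‖ ^ 2) • (star ⟪x, y⟫_𝔄 * ⟪x, y⟫_𝔄) ≤ (‖x‖ ^ 2) • ((‖x‖ ^ 2) • ⟪y, y⟫_𝔄) := by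
    have := add_nonneg h0 (sub_nonneg.mpr hle)
    rw [← sub_nonneg]
    calc (0 : 𝔄) ≤ _ := this
      _ = _ := by abel
  exact (smul_le_smul_iff_of_pos_left hpos).mp h1

lemma RightCStarModule.norm_inner_le (x y : M) : ‖⟪x, y⟫_𝔄‖ ≤ ‖x‖ * ‖y‖ := by
  have h : ‖⟪x, y⟫_𝔄‖ ^ 2 ≤ (‖x‖ * ‖y‖) ^ 2 := calc
    ‖⟪x, y⟫_𝔄‖ ^ 2 = ‖star ⟪x, y⟫_𝔄 * ⟪x, y⟫_𝔄‖ := by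
      rw [CStarRing.norm_star_mul_self, pow_two]
    _ ≤ ‖(‖x‖ ^ 2) • ⟪y, y⟫_𝔄‖ :=
      CStarAlgebra.norm_le_norm_of_nonneg_of_le (star_mul_self_nonneg _)
        (RightCStarModule.inner_mul_le x y)
    _ = ‖x‖ ^ 2 * ‖⟪y, y⟫_𝔄‖ := by
      rw [norm_smul, Real.norm_of_nonneg (by positivity)]
    _ = (‖x‖ * ‖y‖) ^ 2 := by
      rw [mul_pow, RightCStarModule.norm_eq_sqrt_norm_inner_self y, Real.sq_sqrt (norm_nonneg _)]
  exact (pow_le_pow_iff_left₀ (norm_nonneg _) (by positivity) (by norm_num : (2 : ℕ) ≠ 0)).mp h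

/-- The inner product as a sesquilinear map. -/
def RightCStarModule.rInnerSesq : M →ₗ⋆[ℂ] M →ₗ[ℂ] 𝔄 where
  toFun x := { toFun := fun y => ⟪x, y⟫_𝔄
               map_add' := fun _ _ => RightCStarModule.inner_add_right
               map_smul' := fun _ _ => RightCStarModule.inner_smul_right_complex }
  map_add' _ _ := by ext; exact RightCStarModule.inner_add_left
  map_smul' _ _ := by ext; exact RightCStarModule.inner_smul_left_complex

/-- The inner product as a continuous sesquilinear map. -/
noncomputable def RightCStarModule.rInnerSL : M →L⋆[ℂ] M →L[ℂ] 𝔄 :=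
  LinearMap.mkContinuous₂ (RightCStarModule.rInnerSesq : M →ₗ⋆[ℂ] M →ₗ[ℂ] 𝔄) 1 <|
    fun x y => by
      rw [one_mul]
      exact RightCStarModule.norm_inner_le x y

lemma RightCStarModule.continuous_inner :
    Continuous (fun x : M × M => ⟪x.1, x.2⟫_𝔄) := by
  have : (fun x : M × M => ⟪x.1, x.2⟫_𝔄) =
      fun x : M × M => (RightCStarModule.rInnerSL (𝔄 := 𝔄) x.1) x.2 := rfl
  rw [this]
  fun_prop

end RCMHelpers

/-- Two elements of a Hilbert C*-module with the same inner products against everything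
are equal. -/
lemma my_ext_inner {M : Type*} [NormedAddCommGroup M] [NormedSpace ℂ M]
    [Module 𝔄ᵐᵒᵖ M] [RightCStarModule 𝔄 M] {u v : M}
    (h : ∀ y : M, ⟪y, u⟫_𝔄 = ⟪y, v⟫_𝔄) : u = v := by
  have h2 : ⟪u - v, u - v⟫_𝔄 = 0 := by
    rw [RightCStarModule.inner_sub_right, h (u - v), sub_self]
  exact sub_eq_zero.mp (RightCStarModule.inner_self.mp h2)

/-- In a Hilbert module over a unital C*-algebra, the complex scalar action is induced by
the algebra action. -/
lemma my_smul_eq_op {M : Type*} [NormedAddCommGroup M] [NormedSpace ℂ M]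
    [Module 𝔄ᵐᵒᵖ M] [RightCStarModule 𝔄 M] (c : ℂ) (x : M) :
    c • x = x <• (c • (1 : 𝔄)) := by
  refine my_ext_inner fun y => ?_
  rw [RightCStarModule.inner_smul_right_complex, RightCStarModule.inner_op_smul_right,
    mul_smul_comm, mul_one]

/-- Theorem 3.7 (part 1): let `Ψ : E → F` be a bijective `𝔄`-linear orthogonality-preserving
map between Hilbert `𝔄`-modules, with `E` full. If `(V_n)_n` is a sequence of orthogonally
complemented submodules of `E` (with orthogonal projections `P n`), then each `Ψ(V_n)` is an
orthogonally complemented submodule of `F` with orthogonal projection `Ψ ∘ P_{V_n} ∘ Ψ⁻¹`. -/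
theorem image_orthoProjection_of_orthogonalityPreserving
    (Ψ : E ≃ₗ[𝔄ᵐᵒᵖ] F) (hfull : IsFullModule 𝔄 E)
    (horth : IsOrthogonalityPreserving (𝔄 := 𝔄) (Ψ : E → F))
    (V : ℕ → Submodule 𝔄ᵐᵒᵖ E) (P : ℕ → E → E)
    (hproj : ∀ n, IsOrthoProjMapOnto (P n) (V n)) :
    ∀ n, IsOrthoProjMapOnto (fun y : F => Ψ (P n (Ψ.symm y)))
      ((V n).map (Ψ : E →ₗ[𝔄ᵐᵒᵖ] F)) := by
  intro n
  obtain ⟨hPc, hPadd, hPsmul, hPop, hPidem, hPsa, hPmem, hPfix⟩ := hproj n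
  set Q : F → F := fun y : F => Ψ (P n (Ψ.symm y)) with hQ
  -- Ψ and Ψ.symm are ℂ-linear
  have hΨc : ∀ (c : ℂ) (x : E), Ψ (c • x) = c • Ψ x := fun c x => by
    rw [my_smul_eq_op c x, my_smul_eq_op c (Ψ x)]
    exact Ψ.map_smul (MulOpposite.op (c • (1 : 𝔄))) x
  have hΨsc : ∀ (c : ℂ) (y : F), Ψ.symm (c • y) = c • Ψ.symm y := fun c y => by
    rw [my_smul_eq_op c y, my_smul_eq_op c (Ψ.symm y)]
    exact Ψ.symm.map_smul (MulOpposite.op (c • (1 : 𝔄))) y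
  -- basic algebraic properties of Q
  have hQadd : ∀ x y : F, Q (x + y) = Q x + Q y := fun x y => by
    simp only [hQ, map_add, hPadd]
  have hQsmul : ∀ (c : ℂ) (x : F), Q (c • x) = c • Q x := fun c x => by
    simp only [hQ, hΨsc, hPsmul, hΨc]
  have hQop : ∀ (a : 𝔄) (x : F), Q (x <• a) = (Q x) <• a := fun a x => by
    simp only [hQ]
    rw [show (x <• a) = (MulOpposite.op a) • x from rfl, map_smul, hPop]
    exact Ψ.map_smul (MulOpposite.op a) _
  have hQidem : ∀ x : F, Q (Q x) = Q x := fun x => by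
    simp only [hQ, Ψ.symm_apply_apply, hPidem]
  -- self-adjointness
  have hQsa : ∀ x y : F, ⟪Q x, y⟫_𝔄 = ⟪x, Q y⟫_𝔄 := by
    intro x y
    obtain ⟨a, rfl⟩ := Ψ.surjective x
    obtain ⟨b, rfl⟩ := Ψ.surjective y
    have h1 : ⟪P n a, b - P n b⟫_𝔄 = 0 := by
      rw [RightCStarModule.inner_sub_right, hPsa a b, hPsa a (P n b), hPidem b, sub_self]
    have h2 : ⟪a - P n a, P n b⟫_𝔄 = 0 := by
      rw [RightCStarModule.inner_sub_left, hPsa a (P n b), hPidem b, sub_self]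
    have h1' := horth _ _ h1
    have h2' := horth _ _ h2
    rw [map_sub, RightCStarModule.inner_sub_right, sub_eq_zero] at h1'
    rw [map_sub, RightCStarModule.inner_sub_left, sub_eq_zero] at h2'
    show ⟪Ψ (P n (Ψ.symm (Ψ a))), Ψ b⟫_𝔄 = ⟪Ψ a, Ψ (P n (Ψ.symm (Ψ b)))⟫_𝔄
    rw [Ψ.symm_apply_apply, Ψ.symm_apply_apply, h1']
    exact h2'.symm
  -- continuity via the closed graph theorem
  have hQcont : Continuous Q := by
    let L : F →ₗ[ℂ] F :=
      { toFun := Q, map_add' := hQadd, map_smul' := hQsmul }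
    have : Continuous L := by
      apply L.continuous_of_seq_closed_graph
      intro u x y hu hQu
      refine (my_ext_inner fun z => ?_).symm
      have t1 : Filter.Tendsto (fun k => ⟪z, L (u k)⟫_𝔄) Filter.atTop (nhds ⟪z, y⟫_𝔄) := by
        exact (RightCStarModule.continuous_inner.tendsto (z, y)).comp
          (Filter.Tendsto.prodMk_nhds tendsto_const_nhds hQu)
      have t2 : Filter.Tendsto (fun k => ⟪z, L (u k)⟫_𝔄) Filter.atTop
          (nhds ⟪z, L x⟫_𝔄) := by
        have : (fun k => ⟪z, L (u k)⟫_𝔄) = fun k => ⟪Q z, u k⟫_𝔄 := by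
          funext k; rw [show L (u k) = Q (u k) from rfl, ← hQsa]
        rw [this, show ⟪z, L x⟫_𝔄 = ⟪Q z, x⟫_𝔄 from (hQsa z x).symm]
        exact (RightCStarModule.continuous_inner.tendsto (Q z, x)).comp
          (Filter.Tendsto.prodMk_nhds tendsto_const_nhds hu)
      exact tendsto_nhds_unique t2 t1
    exact this
  refine ⟨hQcont, hQadd, hQsmul, hQop, hQidem, hQsa, ?_, ?_⟩
  · intro x
    exact ⟨P n (Ψ.symm x), hPmem _, rfl⟩
  · rintro x ⟨v, hv, rfl⟩
    show Ψ (P n (Ψ.symm (Ψ v))) = Ψ v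
    rw [Ψ.symm_apply_apply, hPfix v hv]
end

section
/- Let 𝔄 be a unital C*-algebra, ℌ a Hilbert 𝔄-module, and (ℌ_n)_{n∈ℕ*} a sequence of orthogonally complemented submodules of ℌ. Let 𝔪((ℌ_n)) denote the set of weights (ω_n)_{n∈ℕ*} of 𝔄 such that ((ℌ_n, ω_n))_{n∈ℕ*} is a *-fusion frame of ℌ. Then for all (α_n), (β_n) ∈ 𝔪((ℌ_n)) the sequence (α_n + β_n)_{n∈ℕ*} belongs to 𝔪((ℌ_n)), and for every λ ∈ ℝ with λ > 0, (λα_n)_{n∈ℕ*} belongs to 𝔪((ℌ_n)); thus 𝔪((ℌ_n)) is a convex cone of the ℂ-vector space 𝔄^{ℕ*}. -/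
open scoped InnerProductSpace RightActions

variable {𝔄 : Type*} [CStarAlgebra 𝔄] [PartialOrder 𝔄] [StarOrderedRing 𝔄]
variable {H : Type*} [NormedAddCommGroup H] [NormedSpace ℂ H] [Module 𝔄ᵐᵒᵖ H]
  [RightCStarModule 𝔄 H] [CompleteSpace H]

/-- `P` is the orthogonal projection of the Hilbert `𝔄`-module `H` onto the orthogonally
complemented submodule `K`: a bounded `𝔄`-linear idempotent which is self-adjoint with
respect to the `𝔄`-valued inner product and has range `K`. -/
def IsOrthoProjectionOnto (P : H →L[ℂ] H) (K : Submodule 𝔄ᵐᵒᵖ H) : Prop :=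
  (∀ (a : 𝔄) (x : H), P (x <• a) = (P x) <• a) ∧
  (∀ x, P (P x) = P x) ∧
  (∀ x y : H, ⟪P x, y⟫_𝔄 = ⟪x, P y⟫_𝔄) ∧
  (∀ x, P x ∈ K) ∧ (∀ x ∈ K, P x = x)

/-- The weighted sequence of orthogonally complemented submodules whose orthogonal
projections are `P n` is a *-fusion frame of `H` with lower bound `A` and upper bound `B`. -/
def IsFusionFrameWith (P : ℕ → H →L[ℂ] H) (ω : ℕ → 𝔄) (A B : 𝔄) : Prop :=
  IsStrictlyPositive' A ∧ IsStrictlyPositive' B ∧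
  ∀ x : H, Summable (fun n => ω n ^ 2 * ⟪P n x, P n x⟫_𝔄) ∧
    ⟪x <• A, x <• A⟫_𝔄 ≤ ∑' n, ω n ^ 2 * ⟪P n x, P n x⟫_𝔄 ∧
    (∑' n, ω n ^ 2 * ⟪P n x, P n x⟫_𝔄) ≤ ⟪x <• B, x <• B⟫_𝔄

/-- A *-fusion frame (with some pair of strictly positive bounds). -/
def IsFusionFrame (P : ℕ → H →L[ℂ] H) (ω : ℕ → 𝔄) : Prop :=
  ∃ A B : 𝔄, IsFusionFrameWith P ω A B

/- ### Auxiliary lemmas -/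

open scoped NNReal CStarAlgebra

lemma mem_center_comm {c : 𝔄} (hc : c ∈ Set.center 𝔄) (g : 𝔄) : g * c = c * g :=
  Semigroup.mem_center_iff.mp hc g

lemma central_sub {a b : 𝔄} (ha : a ∈ Set.center 𝔄) (hb : b ∈ Set.center 𝔄) :
    a - b ∈ Set.center 𝔄 := by
  rw [sub_eq_add_neg]; exact Set.add_mem_center ha (Set.neg_mem_center hb)

lemma central_mul_nonneg {c p : 𝔄} (hc : c ∈ Set.center 𝔄) (hc0 : 0 ≤ c) (hp : 0 ≤ p) :
    0 ≤ c * p := by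
  have hq0 : (0 : 𝔄) ≤ CFC.sqrt p := CFC.sqrt_nonneg p
  have hqq : CFC.sqrt p * CFC.sqrt p = p := CFC.sqrt_mul_sqrt_self p hp
  have hstar : star (CFC.sqrt p) = CFC.sqrt p := (IsSelfAdjoint.of_nonneg hq0).star_eq
  have key : c * p = star (CFC.sqrt p) * c * CFC.sqrt p := by
    rw [hstar]
    conv_lhs => rw [← hqq]
    rw [← mul_assoc, ← mem_center_comm hc (CFC.sqrt p)]
  rw [key]
  exact star_left_conjugate_nonneg hc0 _

lemma central_mul_mono {c d p : 𝔄} (h : d - c ∈ Set.center 𝔄) (h0 : 0 ≤ d - c) (hp : 0 ≤ p) :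
    c * p ≤ d * p := by
  have := central_mul_nonneg h h0 hp
  rw [sub_mul] at this
  exact sub_nonneg.mp this

lemma central_mul_le_mul {c u v : 𝔄} (hc : c ∈ Set.center 𝔄) (hc0 : 0 ≤ c) (huv : u ≤ v) :
    c * u ≤ c * v := by
  have := central_mul_nonneg hc hc0 (sub_nonneg.mpr huv)
  rw [mul_sub] at this
  exact sub_nonneg.mp this

lemma algebraMap_nonneg' {t : ℝ} (ht : 0 ≤ t) : (0 : 𝔄) ≤ algebraMap ℝ 𝔄 t := by
  have h1 : algebraMap ℝ 𝔄 t
      = star (algebraMap ℝ 𝔄 (Real.sqrt t)) * algebraMap ℝ 𝔄 (Real.sqrt t) := by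
    have : star (algebraMap ℝ 𝔄 (Real.sqrt t)) = algebraMap ℝ 𝔄 (Real.sqrt t) := by
      rw [← algebraMap_star_comm, star_trivial]
    rw [this, ← map_mul, Real.mul_self_sqrt ht]
  rw [h1]
  exact star_mul_self_nonneg _

lemma algebraMap_central (t : ℝ) : algebraMap ℝ 𝔄 t ∈ Set.center 𝔄 :=
  Semigroup.mem_center_iff.mpr fun g => (Algebra.commutes t g).symm

lemma algebraMap_mono' {s t : ℝ} (h : s ≤ t) : algebraMap ℝ 𝔄 s ≤ algebraMap ℝ 𝔄 t := by
  rw [← sub_nonneg, ← map_sub]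
  exact algebraMap_nonneg' (by linarith)

lemma real_smul_le_smul {t : ℝ} (ht : 0 ≤ t) {u v : 𝔄} (huv : u ≤ v) : t • u ≤ t • v := by
  rw [Algebra.smul_def, Algebra.smul_def]
  exact central_mul_le_mul (algebraMap_central t) (algebraMap_nonneg' ht) huv

lemma sq_nonneg_of_selfAdjoint {a : 𝔄} (ha : IsSelfAdjoint a) : 0 ≤ a ^ 2 := by
  have := star_mul_self_nonneg a
  rwa [ha.star_eq, ← pow_two] at this

lemma summable_of_nonneg_of_le' {f g : ℕ → 𝔄} (hf0 : ∀ n, 0 ≤ f n) (hfg : ∀ n, f n ≤ g n)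
    (hg : Summable g) : Summable f := by
  rw [summable_iff_vanishing] at hg ⊢
  intro e he
  obtain ⟨ε, hε, hball⟩ := Metric.mem_nhds_iff.mp he
  obtain ⟨s, hs⟩ := hg (Metric.ball 0 ε) (Metric.ball_mem_nhds 0 hε)
  refine ⟨s, fun t ht => hball ?_⟩
  rw [Metric.mem_ball, dist_zero_right]
  have h1 : ‖∑ i ∈ t, f i‖ ≤ ‖∑ i ∈ t, g i‖ :=
    CStarAlgebra.norm_le_norm_of_nonneg_of_le (Finset.sum_nonneg fun i _ => hf0 i)
      (Finset.sum_le_sum fun i _ => hfg i)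
  have h2 := hs t ht
  rw [Metric.mem_ball, dist_zero_right] at h2
  exact lt_of_le_of_lt h1 h2

lemma inner_op_smul_smul (a : 𝔄) (x : H) :
    ⟪x <• a, x <• a⟫_𝔄 = star a * ⟪x, x⟫_𝔄 * a := by
  have h : ⟪x <• a, x⟫_𝔄 = star a * ⟪x, x⟫_𝔄 := by
    rw [← RightCStarModule.star_inner x (x <• a), RightCStarModule.inner_op_smul_right, star_mul,
      RightCStarModule.star_inner]
  rw [RightCStarModule.inner_op_smul_right, h]

lemma term_conj (Q : H →L[ℂ] H) (hQ : ∀ (a : 𝔄) (x : H), Q (x <• a) = (Q x) <• a)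
    {w : 𝔄} (hw : w ∈ Set.center 𝔄) (a : 𝔄) (y : H) :
    w * ⟪Q (y <• a), Q (y <• a)⟫_𝔄 = star a * (w * ⟪Q y, Q y⟫_𝔄) * a := by
  rw [hQ a y, inner_op_smul_smul]
  have hws : w * star a = star a * w := (mem_center_comm hw (star a)).symm
  simp only [← mul_assoc]
  rw [hws]

/-- Paschke-type scalar upper bound: if the frame sums are dominated by
`⟪x <• B, x <• B⟫`, then they are dominated by the scalar multiple `‖B‖ ^ 2` of `⟪x, x⟫`. -/
lemma fusion_upper_scalar (P : ℕ → H →L[ℂ] H)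
    (hP : ∀ n (a : 𝔄) (x : H), P n (x <• a) = (P n x) <• a)
    (ω : ℕ → 𝔄) (hc : ∀ n, ω n ^ 2 ∈ Set.center 𝔄) (h0 : ∀ n, 0 ≤ ω n ^ 2) (B : 𝔄)
    (hsum : ∀ x : H, Summable fun n => ω n ^ 2 * ⟪P n x, P n x⟫_𝔄)
    (hub : ∀ x : H, (∑' n, ω n ^ 2 * ⟪P n x, P n x⟫_𝔄) ≤ ⟪x <• B, x <• B⟫_𝔄)
    (x : H) :
    (∑' n, ω n ^ 2 * ⟪P n x, P n x⟫_𝔄) ≤ algebraMap ℝ 𝔄 (‖B‖ ^ 2) * ⟪x, x⟫_𝔄 := by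
  have hterm : ∀ (y : H) (n : ℕ), 0 ≤ ω n ^ 2 * ⟪P n y, P n y⟫_𝔄 := fun y n =>
    central_mul_nonneg (hc n) (h0 n) RightCStarModule.inner_self_nonneg
  refine Summable.tsum_le_of_sum_le (hsum x) fun F => ?_
  have hεbound : ∀ ε : ℝ, 0 < ε →
      (∑ n ∈ F, ω n ^ 2 * ⟪P n x, P n x⟫_𝔄)
        ≤ algebraMap ℝ 𝔄 (‖B‖ ^ 2) * ⟪x, x⟫_𝔄 + algebraMap ℝ 𝔄 (‖B‖ ^ 2 * ε) := by
    intro ε hε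
    have hh0 : (0 : 𝔄) ≤ ⟪x, x⟫_𝔄 := RightCStarModule.inner_self_nonneg
    set h : 𝔄 := ⟪x, x⟫_𝔄 with hh
    set u : 𝔄 := h + algebraMap ℝ 𝔄 ε with hu
    have hu0 : 0 ≤ u := add_nonneg hh0 (algebraMap_nonneg' hε.le)
    have hεle : algebraMap ℝ 𝔄 ε ≤ u := le_add_of_nonneg_left hh0
    have huu : IsUnit u :=
      CStarAlgebra.isUnit_of_le (algebraMap ℝ 𝔄 ε) hεle
        ⟨algebraMap_nonneg' hε.le, (isUnit_iff_ne_zero.mpr hε.ne').map (algebraMap ℝ 𝔄)⟩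
    have hspec : (0 : ℝ≥0) ∉ spectrum ℝ≥0 u := spectrum.zero_notMem ℝ≥0 huu
    set s : 𝔄 := CFC.sqrt u with hsdef
    set d : 𝔄 := u ^ (-(1 / 2) : ℝ) with hddef
    have hs0 : 0 ≤ s := CFC.sqrt_nonneg u
    have hd0 : 0 ≤ d := CFC.rpow_nonneg
    have hds : d * s = 1 := by
      rw [hsdef, hddef, CFC.sqrt_eq_rpow]
      exact CFC.rpow_neg_mul_rpow (1 / 2) ⟨hu0, huu⟩
    have hsstar : star s = s := (IsSelfAdjoint.of_nonneg hs0).star_eq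
    have hdstar : star d = d := (IsSelfAdjoint.of_nonneg hd0).star_eq
    set x' : H := x <• d with hx'
    have hxx' : x' <• s = x := by
      rw [hx', smul_smul, ← MulOpposite.op_mul, hds, MulOpposite.op_one, one_smul]
    have hinnx' : ⟪x', x'⟫_𝔄 = d * h * d := by
      rw [hx', inner_op_smul_smul, hdstar]
    have hx'le1 : ⟪x', x'⟫_𝔄 ≤ 1 := by
      rw [hinnx']
      calc d * h * d = star d * h * d := by rw [hdstar]
        _ ≤ star d * u * d :=
          star_left_conjugate_le_conjugate (le_add_of_nonneg_right (algebraMap_nonneg' hε.le)) d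
        _ = d * u * d := by rw [hdstar]
        _ = 1 := CFC.conjugate_rpow_neg_one_half u ⟨hu0, huu⟩
    have hx'n : ‖⟪x', x'⟫_𝔄‖ ≤ 1 :=
      (CStarAlgebra.norm_le_one_iff_of_nonneg _ RightCStarModule.inner_self_nonneg).mpr hx'le1
    have hΨ0 : 0 ≤ ∑ n ∈ F, ω n ^ 2 * ⟪P n x', P n x'⟫_𝔄 :=
      Finset.sum_nonneg fun n _ => hterm x' n
    have hΨub : (∑ n ∈ F, ω n ^ 2 * ⟪P n x', P n x'⟫_𝔄) ≤ star B * ⟪x', x'⟫_𝔄 * B := by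
      refine le_trans (Summable.sum_le_tsum F (fun n _ => hterm x' n) (hsum x')) ?_
      have := hub x'
      rwa [inner_op_smul_smul] at this
    have hΨnorm : ‖∑ n ∈ F, ω n ^ 2 * ⟪P n x', P n x'⟫_𝔄‖ ≤ ‖B‖ ^ 2 := by
      refine le_trans (CStarAlgebra.norm_le_norm_of_nonneg_of_le hΨ0 hΨub) ?_
      calc ‖star B * ⟪x', x'⟫_𝔄 * B‖ ≤ ‖star B * ⟪x', x'⟫_𝔄‖ * ‖B‖ := norm_mul_le _ _
        _ ≤ ‖star B‖ * ‖⟪x', x'⟫_𝔄‖ * ‖B‖ :=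
          mul_le_mul_of_nonneg_right (norm_mul_le _ _) (norm_nonneg _)
        _ ≤ ‖B‖ * 1 * ‖B‖ := by
          rw [norm_star]
          exact mul_le_mul_of_nonneg_right
            (mul_le_mul_of_nonneg_left hx'n (norm_nonneg _)) (norm_nonneg _)
        _ = ‖B‖ ^ 2 := by ring
    have hΨle : (∑ n ∈ F, ω n ^ 2 * ⟪P n x', P n x'⟫_𝔄) ≤ algebraMap ℝ 𝔄 (‖B‖ ^ 2) :=
      le_trans (IsSelfAdjoint.le_algebraMap_norm_self (IsSelfAdjoint.of_nonneg hΨ0))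
        (algebraMap_mono' hΨnorm)
    have hkey : (∑ n ∈ F, ω n ^ 2 * ⟪P n x, P n x⟫_𝔄)
        = star s * (∑ n ∈ F, ω n ^ 2 * ⟪P n x', P n x'⟫_𝔄) * s := by
      rw [Finset.mul_sum, Finset.sum_mul]
      refine Finset.sum_congr rfl fun n _ => ?_
      conv_lhs => rw [← hxx']
      exact term_conj (P n) (hP n) (hc n) s x'
    calc (∑ n ∈ F, ω n ^ 2 * ⟪P n x, P n x⟫_𝔄)
        = star s * (∑ n ∈ F, ω n ^ 2 * ⟪P n x', P n x'⟫_𝔄) * s := hkey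
      _ ≤ star s * algebraMap ℝ 𝔄 (‖B‖ ^ 2) * s := star_left_conjugate_le_conjugate hΨle s
      _ = algebraMap ℝ 𝔄 (‖B‖ ^ 2) * (s * s) := by
          rw [hsstar, ← Algebra.commutes (‖B‖ ^ 2) s, mul_assoc]
      _ = algebraMap ℝ 𝔄 (‖B‖ ^ 2) * u := by rw [CFC.sqrt_mul_sqrt_self u hu0]
      _ = algebraMap ℝ 𝔄 (‖B‖ ^ 2) * h + algebraMap ℝ 𝔄 (‖B‖ ^ 2 * ε) := by
          rw [hu, mul_add, ← map_mul]
  have hcont : Continuous fun ε : ℝ =>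
      algebraMap ℝ 𝔄 (‖B‖ ^ 2) * ⟪x, x⟫_𝔄 + algebraMap ℝ 𝔄 (‖B‖ ^ 2 * ε) := by
    simp only [Algebra.algebraMap_eq_smul_one]
    exact continuous_const.add (((continuous_const.mul continuous_id).smul continuous_const))
  have htend : Filter.Tendsto
      (fun ε : ℝ => algebraMap ℝ 𝔄 (‖B‖ ^ 2) * ⟪x, x⟫_𝔄 + algebraMap ℝ 𝔄 (‖B‖ ^ 2 * ε))
      (nhdsWithin 0 (Set.Ioi 0)) (nhds (algebraMap ℝ 𝔄 (‖B‖ ^ 2) * ⟪x, x⟫_𝔄)) := by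
    have h2 := (hcont.tendsto 0).mono_left (nhdsWithin_le_nhds (s := Set.Ioi (0 : ℝ)))
    simpa using h2
  exact ge_of_tendsto htend
    (Filter.eventually_of_mem self_mem_nhdsWithin fun ε hε => hεbound ε hε)

/-- Theorem 3.8: the set `𝔪((ℌ_n)_n)` of weights `ω` such that `((ℌ_n, ω_n))_n` is a
*-fusion frame of `H` is a convex cone of `𝔄^ℕ`: it is closed under addition and under
multiplication by positive real scalars. -/
theorem multipliers_convex_cone
    (P : ℕ → H →L[ℂ] H) (ℌ : ℕ → Submodule 𝔄ᵐᵒᵖ H)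
    (hproj : ∀ n, IsOrthoProjectionOnto (P n) (ℌ n)) :
    (∀ α β : ℕ → 𝔄,
      IsWeight α → IsFusionFrame P α → IsWeight β → IsFusionFrame P β →
        IsWeight (fun n => α n + β n) ∧ IsFusionFrame P (fun n => α n + β n)) ∧
    (∀ α : ℕ → 𝔄, IsWeight α → IsFusionFrame P α → ∀ l : ℝ, 0 < l →
        IsWeight (fun n => (l : ℂ) • α n) ∧ IsFusionFrame P (fun n => (l : ℂ) • α n)) := by
  have hP : ∀ n (a : 𝔄) (x : H), P n (x <• a) = (P n x) <• a := fun n => (hproj n).1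
  have hsqc : ∀ (ω : ℕ → 𝔄), IsWeight ω → ∀ n, ω n ^ 2 ∈ Set.center 𝔄 := by
    intro ω hω n
    rw [pow_two]
    exact Set.mul_mem_center (hω n).1 (hω n).1
  have hsq0 : ∀ (ω : ℕ → 𝔄), IsWeight ω → ∀ n, 0 ≤ ω n ^ 2 := fun ω hω n =>
    sq_nonneg_of_selfAdjoint (IsSelfAdjoint.of_nonneg (hω n).2.1)
  constructor
  · rintro α β hαw ⟨A₁, B₁, hA₁, hB₁, h₁⟩ hβw ⟨A₂, B₂, hA₂, hB₂, h₂⟩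
    -- weight
    have hγw : IsWeight (fun n => α n + β n) := fun n =>
      ⟨Set.add_mem_center (hαw n).1 (hβw n).1,
        add_nonneg (hαw n).2.1 (hβw n).2.1,
        CStarAlgebra.isUnit_of_le (α n)
          (le_add_of_nonneg_right (hβw n).2.1) (hαw n).2⟩
    refine ⟨hγw, ?_⟩
    -- order facts on weights
    have hdiff_lo : ∀ n, (α n + β n) ^ 2 - α n ^ 2 ∈ Set.center 𝔄 ∧
        0 ≤ (α n + β n) ^ 2 - α n ^ 2 := by
      intro n
      have hab : (α n + β n) ^ 2 - α n ^ 2 = α n * β n + β n * α n + β n ^ 2 := by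
        noncomm_ring
      constructor
      · rw [hab]
        exact Set.add_mem_center
          (Set.add_mem_center (Set.mul_mem_center (hαw n).1 (hβw n).1)
            (Set.mul_mem_center (hβw n).1 (hαw n).1))
          (hsqc β hβw n)
      · rw [hab]
        have h1 : 0 ≤ α n * β n :=
          central_mul_nonneg (hαw n).1 (hαw n).2.1 (hβw n).2.1
        have h2 : β n * α n = α n * β n := mem_center_comm (hαw n).1 (β n)
        rw [h2]
        exact add_nonneg (add_nonneg h1 h1) (hsq0 β hβw n)
    have hdiff_hi : ∀ n, (α n ^ 2 + α n ^ 2 + (β n ^ 2 + β n ^ 2)) - (α n + β n) ^ 2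
          ∈ Set.center 𝔄 ∧
        0 ≤ (α n ^ 2 + α n ^ 2 + (β n ^ 2 + β n ^ 2)) - (α n + β n) ^ 2 := by
      intro n
      have hab : (α n ^ 2 + α n ^ 2 + (β n ^ 2 + β n ^ 2)) - (α n + β n) ^ 2
          = (α n - β n) * (α n - β n) := by noncomm_ring
      constructor
      · rw [hab]
        exact Set.mul_mem_center (central_sub (hαw n).1 (hβw n).1)
          (central_sub (hαw n).1 (hβw n).1)
      · rw [hab]
        have hsa : star (α n - β n) = α n - β n :=
          ((IsSelfAdjoint.of_nonneg (hαw n).2.1).sub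
            (IsSelfAdjoint.of_nonneg (hβw n).2.1)).star_eq
        have := star_mul_self_nonneg (α n - β n)
        rwa [hsa] at this
    -- scalar upper bounds via Paschke
    have pasα := fusion_upper_scalar P hP α (hsqc α hαw) (hsq0 α hαw) B₁
      (fun y => (h₁ y).1) (fun y => (h₁ y).2.2)
    have pasβ := fusion_upper_scalar P hP β (hsqc β hβw) (hsq0 β hβw) B₂
      (fun y => (h₂ y).1) (fun y => (h₂ y).2.2)
    set c : ℝ := ‖B₁‖ ^ 2 + ‖B₁‖ ^ 2 + (‖B₂‖ ^ 2 + ‖B₂‖ ^ 2) + 1 with hc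
    have hc0 : (0 : ℝ) < c := by
      have h1 := sq_nonneg ‖B₁‖
      have h2 := sq_nonneg ‖B₂‖
      rw [hc]; linarith
    refine ⟨A₁, algebraMap ℝ 𝔄 (Real.sqrt c), hA₁,
      ⟨algebraMap_nonneg' (Real.sqrt_nonneg c),
        (isUnit_iff_ne_zero.mpr (Real.sqrt_pos.mpr hc0).ne').map (algebraMap ℝ 𝔄)⟩,
      fun x => ?_⟩
    have hp0 : ∀ n, (0 : 𝔄) ≤ ⟪P n x, P n x⟫_𝔄 := fun n => RightCStarModule.inner_self_nonneg
    have e_lo : ∀ n, α n ^ 2 * ⟪P n x, P n x⟫_𝔄 ≤ (α n + β n) ^ 2 * ⟪P n x, P n x⟫_𝔄 :=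
      fun n => central_mul_mono (hdiff_lo n).1 (hdiff_lo n).2 (hp0 n)
    have e_hi : ∀ n, (α n + β n) ^ 2 * ⟪P n x, P n x⟫_𝔄
        ≤ (α n ^ 2 * ⟪P n x, P n x⟫_𝔄 + α n ^ 2 * ⟪P n x, P n x⟫_𝔄)
          + (β n ^ 2 * ⟪P n x, P n x⟫_𝔄 + β n ^ 2 * ⟪P n x, P n x⟫_𝔄) := by
      intro n
      have := central_mul_mono (hdiff_hi n).1 (hdiff_hi n).2 (hp0 n)
      calc (α n + β n) ^ 2 * ⟪P n x, P n x⟫_𝔄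
          ≤ (α n ^ 2 + α n ^ 2 + (β n ^ 2 + β n ^ 2)) * ⟪P n x, P n x⟫_𝔄 := this
        _ = (α n ^ 2 * ⟪P n x, P n x⟫_𝔄 + α n ^ 2 * ⟪P n x, P n x⟫_𝔄)
          + (β n ^ 2 * ⟪P n x, P n x⟫_𝔄 + β n ^ 2 * ⟪P n x, P n x⟫_𝔄) := by
            simp only [add_mul]
    have hγ0 : ∀ n, 0 ≤ (α n + β n) ^ 2 * ⟪P n x, P n x⟫_𝔄 := fun n =>
      central_mul_nonneg (hsqc _ hγw n) (hsq0 _ hγw n) (hp0 n)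
    have hgsum : Summable (fun n =>
        (α n ^ 2 * ⟪P n x, P n x⟫_𝔄 + α n ^ 2 * ⟪P n x, P n x⟫_𝔄)
          + (β n ^ 2 * ⟪P n x, P n x⟫_𝔄 + β n ^ 2 * ⟪P n x, P n x⟫_𝔄)) :=
      ((h₁ x).1.add (h₁ x).1).add ((h₂ x).1.add (h₂ x).1)
    have hγsum : Summable (fun n => (α n + β n) ^ 2 * ⟪P n x, P n x⟫_𝔄) :=
      summable_of_nonneg_of_le' hγ0 e_hi hgsum
    refine ⟨hγsum, ?_, ?_⟩
    · exact le_trans (h₁ x).2.1 (Summable.tsum_le_tsum e_lo (h₁ x).1 hγsum)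
    · have hbc : ⟪x <• algebraMap ℝ 𝔄 (Real.sqrt c), x <• algebraMap ℝ 𝔄 (Real.sqrt c)⟫_𝔄
          = algebraMap ℝ 𝔄 c * ⟪x, x⟫_𝔄 := by
        rw [inner_op_smul_smul]
        rw [show star (algebraMap ℝ 𝔄 (Real.sqrt c)) = algebraMap ℝ 𝔄 (Real.sqrt c) by
          rw [← algebraMap_star_comm, star_trivial]]
        rw [mul_assoc, ← Algebra.commutes (Real.sqrt c) (⟪x, x⟫_𝔄), ← mul_assoc,
          ← map_mul, Real.mul_self_sqrt hc0.le]
      rw [hbc]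
      calc (∑' n, (α n + β n) ^ 2 * ⟪P n x, P n x⟫_𝔄)
          ≤ ∑' n, ((α n ^ 2 * ⟪P n x, P n x⟫_𝔄 + α n ^ 2 * ⟪P n x, P n x⟫_𝔄)
            + (β n ^ 2 * ⟪P n x, P n x⟫_𝔄 + β n ^ 2 * ⟪P n x, P n x⟫_𝔄)) :=
          Summable.tsum_le_tsum e_hi hγsum hgsum
        _ = ((∑' n, α n ^ 2 * ⟪P n x, P n x⟫_𝔄) + (∑' n, α n ^ 2 * ⟪P n x, P n x⟫_𝔄))
            + ((∑' n, β n ^ 2 * ⟪P n x, P n x⟫_𝔄) + (∑' n, β n ^ 2 * ⟪P n x, P n x⟫_𝔄)) := by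
            rw [Summable.tsum_add ((h₁ x).1.add (h₁ x).1) ((h₂ x).1.add (h₂ x).1),
              Summable.tsum_add (h₁ x).1 (h₁ x).1, Summable.tsum_add (h₂ x).1 (h₂ x).1]
        _ ≤ (algebraMap ℝ 𝔄 (‖B₁‖ ^ 2) * ⟪x, x⟫_𝔄 + algebraMap ℝ 𝔄 (‖B₁‖ ^ 2) * ⟪x, x⟫_𝔄)
            + (algebraMap ℝ 𝔄 (‖B₂‖ ^ 2) * ⟪x, x⟫_𝔄 + algebraMap ℝ 𝔄 (‖B₂‖ ^ 2) * ⟪x, x⟫_𝔄) :=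
          add_le_add (add_le_add (pasα x) (pasα x)) (add_le_add (pasβ x) (pasβ x))
        _ = algebraMap ℝ 𝔄 (‖B₁‖ ^ 2 + ‖B₁‖ ^ 2 + (‖B₂‖ ^ 2 + ‖B₂‖ ^ 2)) * ⟪x, x⟫_𝔄 := by
            rw [map_add, map_add, map_add, add_mul, add_mul, add_mul]
        _ ≤ algebraMap ℝ 𝔄 c * ⟪x, x⟫_𝔄 := by
            refine central_mul_mono ?_ ?_ RightCStarModule.inner_self_nonneg
            · rw [← map_sub]; exact algebraMap_central _
            · rw [← map_sub]
              exact algebraMap_nonneg' (by rw [hc]; linarith)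
  · rintro α hαw ⟨A₁, B₁, hA₁, hB₁, h₁⟩ l hl
    have hsmul : ∀ a : 𝔄, (l : ℂ) • a = algebraMap ℝ 𝔄 l * a := fun a => by
      rw [Complex.coe_smul, Algebra.smul_def]
    have hγw : IsWeight (fun n => (l : ℂ) • α n) := by
      intro n
      refine ⟨?_, ?_, ?_⟩
      · refine Semigroup.mem_center_iff.mpr fun g => ?_
        show g * ((l : ℂ) • α n) = ((l : ℂ) • α n) * g
        rw [mul_smul_comm, smul_mul_assoc, mem_center_comm (hαw n).1 g]
      · show (0 : 𝔄) ≤ (l : ℂ) • α n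
        rw [hsmul]
        exact central_mul_nonneg (algebraMap_central l) (algebraMap_nonneg' hl.le)
          (hαw n).2.1
      · show IsUnit ((l : ℂ) • α n)
        rw [hsmul]
        exact ((isUnit_iff_ne_zero.mpr hl.ne').map (algebraMap ℝ 𝔄)).mul (hαw n).2.2
    refine ⟨hγw, ?_⟩
    have hA₁' : IsStrictlyPositive' (l • A₁) := by
      constructor
      · rw [Algebra.smul_def]
        exact central_mul_nonneg (algebraMap_central l) (algebraMap_nonneg' hl.le) hA₁.1
      · rw [Algebra.smul_def]
        exact ((isUnit_iff_ne_zero.mpr hl.ne').map (algebraMap ℝ 𝔄)).mul hA₁.2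
    have hB₁' : IsStrictlyPositive' (l • B₁) := by
      constructor
      · rw [Algebra.smul_def]
        exact central_mul_nonneg (algebraMap_central l) (algebraMap_nonneg' hl.le) hB₁.1
      · rw [Algebra.smul_def]
        exact ((isUnit_iff_ne_zero.mpr hl.ne').map (algebraMap ℝ 𝔄)).mul hB₁.2
    refine ⟨l • A₁, l • B₁, hA₁', hB₁', fun x => ?_⟩
    have hterm_eq : ∀ n, ((l : ℂ) • α n) ^ 2 * ⟪P n x, P n x⟫_𝔄
        = (l ^ 2 : ℝ) • (α n ^ 2 * ⟪P n x, P n x⟫_𝔄) := by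
      intro n
      rw [smul_pow, smul_mul_assoc,
        show ((l : ℂ) ^ 2) = ((l ^ 2 : ℝ) : ℂ) by push_cast; ring, Complex.coe_smul]
    have hsum' : Summable (fun n => ((l : ℂ) • α n) ^ 2 * ⟪P n x, P n x⟫_𝔄) := by
      simp only [hterm_eq]
      exact (h₁ x).1.const_smul _
    have htsum_eq : (∑' n, ((l : ℂ) • α n) ^ 2 * ⟪P n x, P n x⟫_𝔄)
        = (l ^ 2 : ℝ) • (∑' n, α n ^ 2 * ⟪P n x, P n x⟫_𝔄) := by
      simp only [hterm_eq]
      exact Summable.tsum_const_smul _ (h₁ x).1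
    have hsm : ∀ C : 𝔄, ⟪x <• (l • C), x <• (l • C)⟫_𝔄
        = (l ^ 2 : ℝ) • (star C * ⟪x, x⟫_𝔄 * C) := by
      intro C
      rw [inner_op_smul_smul, star_smul, star_trivial, smul_mul_assoc, smul_mul_assoc,
        mul_smul_comm, smul_smul, ← pow_two]
    refine ⟨hsum', ?_, ?_⟩
    · beta_reduce
      rw [htsum_eq, hsm A₁]
      refine real_smul_le_smul (sq_nonneg l) ?_
      have := (h₁ x).2.1
      rwa [inner_op_smul_smul] at this
    · beta_reduce
      rw [htsum_eq, hsm B₁]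
      refine real_smul_le_smul (sq_nonneg l) ?_
      have := (h₁ x).2.2
      rwa [inner_op_smul_smul] at this
end
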